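/- Let p_n ∈ (0,1) and let X_n be independent with P(X_n = (1−p_n)/√(p_n(1−p_n))) = p_n and P(X_n = −p_n/√(p_n(1−p_n))) = 1−p_n. Suppose (k_n) is an increasing sequence with ∑_n (1−p_{k_n}) < ∞. Set Z_n = 1 − (√(p_{k_n}(1−p_{k_n}))/(1−p_{k_n}))·X_{k_n}. Then Z_n → 0 almost surely, while the linear part Z_{n,1} = −(√(p_{k_n}(1−p_{k_n}))/(1−p_{k_n}))·X_{k_n} → −1 almost surely. -/

import Mathlib

open MeasureTheory ProbabilityTheory Filter
open scoped ENNReal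

/-- Independent two-point variables `Xₙ` with `P(Xₙ = (1−pₙ)/√(pₙ(1−pₙ))) = pₙ`,
`P(Xₙ = −pₙ/√(pₙ(1−pₙ))) = 1−pₙ`, and `(kₙ)` increasing with `∑ (1−p_{kₙ}) < ∞`.
Then `Zₙ = 1 − (√(p_{kₙ}(1−p_{kₙ}))/(1−p_{kₙ})) X_{kₙ} → 0` a.s. while the linear part
tends to `−1` a.s. -/
theorem stmt9 {Ω : Type*} [MeasureSpace Ω] [IsProbabilityMeasure (ℙ : Measure Ω)]
    (p : ℕ → ℝ) (hp : ∀ n, p n ∈ Set.Ioo (0 : ℝ) 1)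
    (X : ℕ → Ω → ℝ) (hmeas : ∀ n, Measurable (X n))
    (hindep : iIndepFun X ℙ)
    (hlaw1 : ∀ n, ℙ {ω | X n ω = (1 - p n) / Real.sqrt (p n * (1 - p n))}
      = ENNReal.ofReal (p n))
    (hlaw2 : ∀ n, ℙ {ω | X n ω = -(p n) / Real.sqrt (p n * (1 - p n))}
      = ENNReal.ofReal (1 - p n))
    (k : ℕ → ℕ) (hk : StrictMono k)
    (hsum : Summable (fun n => 1 - p (k n))) :
    (∀ᵐ ω ∂ℙ, Tendsto
      (fun n => 1 - (Real.sqrt (p (k n) * (1 - p (k n))) / (1 - p (k n))) * X (k n) ω)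
      atTop (nhds 0)) ∧
    (∀ᵐ ω ∂ℙ, Tendsto
      (fun n => -(Real.sqrt (p (k n) * (1 - p (k n))) / (1 - p (k n))) * X (k n) ω)
      atTop (nhds (-1))) := by
  set v : ℕ → ℝ := fun n => (1 - p (k n)) / Real.sqrt (p (k n) * (1 - p (k n))) with hv
  set bad : ℕ → Set Ω := fun n => {ω | X (k n) ω = v n}ᶜ with hbad
  have hp1 : ∀ n, (0:ℝ) < p (k n) := fun n => (hp (k n)).1
  have hp2 : ∀ n, (0:ℝ) < 1 - p (k n) := fun n => by have := (hp (k n)).2; linarith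
  have hmeasbad : ∀ n, ℙ (bad n) = ENNReal.ofReal (1 - p (k n)) := by
    intro n
    simp only [hbad]
    show ℙ ((X (k n) ⁻¹' {v n})ᶜ) = _
    rw [prob_compl_eq_one_sub ((hmeas (k n)) (measurableSet_singleton (v n)))]
    rw [show X (k n) ⁻¹' {v n} = {ω | X (k n) ω = v n} from rfl, hlaw1 (k n)]
    rw [← ENNReal.ofReal_one, ← ENNReal.ofReal_sub 1 (hp1 n).le]
  have hsum' : (∑' n, ℙ (bad n)) ≠ ∞ := by
    simp_rw [hmeasbad]
    rw [← ENNReal.ofReal_tsum_of_nonneg (fun n => (hp2 n).le) hsum]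
    exact ENNReal.ofReal_ne_top
  have hBC : ℙ (Filter.limsup bad atTop) = 0 := measure_limsup_atTop_eq_zero hsum'
  have hae : ∀ᵐ ω ∂ℙ, ∀ᶠ n in atTop, X (k n) ω = v n := by
    have : ∀ᵐ ω ∂ℙ, ω ∉ Filter.limsup bad atTop :=
      (ae_iff.mpr (by simpa using hBC))
    filter_upwards [this] with ω hω
    rw [Filter.mem_limsup_iff_frequently_mem, Filter.not_frequently] at hω
    filter_upwards [hω] with n hn
    simpa [hbad] using hn
  have hprod : ∀ n, (Real.sqrt (p (k n) * (1 - p (k n))) / (1 - p (k n))) * v n = 1 := by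
    intro n
    have hs : 0 < Real.sqrt (p (k n) * (1 - p (k n))) :=
      Real.sqrt_pos.mpr (mul_pos (hp1 n) (hp2 n))
    rw [hv]
    rw [div_mul_div_comm, mul_comm (Real.sqrt _) (1 - p (k n)),
      div_self (mul_pos (hp2 n) hs).ne']
  constructor
  · filter_upwards [hae] with ω hω
    refine Tendsto.congr' ?_ tendsto_const_nhds
    filter_upwards [hω] with n hn
    rw [hn, hprod n]; ring
  · filter_upwards [hae] with ω hω
    refine Tendsto.congr' ?_ tendsto_const_nhds
    filter_upwards [hω] with n hn
    rw [hn, neg_mul, hprod n]
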